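/- Assume MD, SCD*, the boundary assumptions, and that φ(b,t1) < φ(b',t1) whenever b ⊊ b'. Suppose there exists a nonempty bundle b_r such that: (1) t_{b_r} < t_b for every nonempty bundle b ≠ b_r (b_r has the strictly largest sold-alone quantity); and (2) for every nonempty bundle b with ¬(b_r ⊆ b), t_{b∪b_r} ≤ max{t_b, t_{b_r}} (the sold-alone quantity of b∪b_r is at least the minimum of those of b and b_r). Then the minimal optimal menu is either a tree menu or a nested menu. -/

import Mathlib

namespace Paper

abbrev Bundle (n : ℕ) := Finset (Fin n)

variable {n : ℕ}

/-- A stochastic bundle: nonnegative weights on bundles summing to one. -/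
def IsStoch (a : Bundle n → ℝ) : Prop :=
  (∀ b, 0 ≤ a b) ∧ ∑ b, a b = 1

/-- The point mass at a bundle, viewed as a stochastic bundle. -/
def pt (b : Bundle n) : Bundle n → ℝ := fun b' => if b' = b then 1 else 0

/-- Virtual value of a stochastic bundle (linear extension). -/
def phiA (φ : Bundle n → ℝ → ℝ) (a : Bundle n → ℝ) (t : ℝ) : ℝ :=
  ∑ b, a b * φ b t

/-- A function is single-crossing on a set: its sign is monotone there. -/
def SingleCrossingOn (g : ℝ → ℝ) (T : Set ℝ) : Prop :=
  MonotoneOn (fun t => Real.sign (g t)) T ∨ AntitoneOn (fun t => Real.sign (g t)) T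

/-- Assumption SCD*: differences of virtual values of stochastic bundles are
single-crossing in the type. -/
def SCDstar (φ : Bundle n → ℝ → ℝ) (t0 t1 : ℝ) : Prop :=
  ∀ a a' : Bundle n → ℝ, IsStoch a → IsStoch a' →
    SingleCrossingOn (fun t => phiA φ a t - phiA φ a' t) (Set.Icc t0 t1)

/-- Assumption MD: differences of virtual values of deterministic bundles are
monotone in the type. -/
def MD (φ : Bundle n → ℝ → ℝ) (t0 t1 : ℝ) : Prop :=
  ∀ b b' : Bundle n,
    MonotoneOn (fun t => φ b t - φ b' t) (Set.Icc t0 t1) ∨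
    AntitoneOn (fun t => φ b t - φ b' t) (Set.Icc t0 t1)

/-- No two distinct bundles have identical virtual value functions on T. -/
def Distinct (φ : Bundle n → ℝ → ℝ) (t0 t1 : ℝ) : Prop :=
  ∀ b b' : Bundle n, b ≠ b' → ∃ t ∈ Set.Icc t0 t1, φ b t ≠ φ b' t

/-- A stochastic bundle is very weakly dominated. -/
def VWD (φ : Bundle n → ℝ → ℝ) (t0 t1 : ℝ) (a : Bundle n → ℝ) : Prop :=
  ∃ a' : Bundle n → ℝ, IsStoch a' ∧ a' ≠ a ∧
    ∀ t ∈ Set.Icc t0 t1, phiA φ a t ≤ phiA φ a' t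

/-- A bundle is a never strict best response. -/
def NeverStrictBR (φ : Bundle n → ℝ → ℝ) (t0 t1 : ℝ) (b : Bundle n) : Prop :=
  ∀ t ∈ Set.Icc t0 t1, ∃ b' : Bundle n, b' ≠ b ∧ φ b t ≤ φ b' t

/-- A menu is optimal if at every type some element attains the upper envelope. -/
def OptimalMenu (φ : Bundle n → ℝ → ℝ) (t0 t1 : ℝ) (S : Finset (Bundle n)) : Prop :=
  ∀ t ∈ Set.Icc t0 t1, ∃ b ∈ S, ∀ b' : Bundle n, φ b' t ≤ φ b t

/-- A minimal optimal menu. -/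
def MinimalOptimalMenu (φ : Bundle n → ℝ → ℝ) (t0 t1 : ℝ) (S : Finset (Bundle n)) : Prop :=
  OptimalMenu φ t0 t1 S ∧ ∀ S' : Finset (Bundle n), S' ⊂ S → ¬ OptimalMenu φ t0 t1 S'

/-- A nested menu: any two elements are comparable under set inclusion. -/
def IsNestedMenu (S : Finset (Bundle n)) : Prop :=
  ∀ b1 ∈ S, ∀ b2 ∈ S, b1 ⊆ b2 ∨ b2 ⊆ b1

/-- A tree menu: a nonempty root contained in every nonempty element, and two
incomparable elements. -/
def IsTreeMenu (S : Finset (Bundle n)) : Prop :=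
  (∃ r ∈ S, r ≠ (∅ : Bundle n) ∧ ∀ b ∈ S, b ≠ (∅ : Bundle n) → r ⊆ b) ∧
  (∃ b1 ∈ S, ∃ b2 ∈ S, ¬ b1 ⊆ b2 ∧ ¬ b2 ⊆ b1)

/-- **Proposition 34.** Under MD, SCD*, the boundary assumptions and strict
monotonicity of the top type's valuation in strict set inclusion, if some nonempty
bundle b_r has the strictly largest sold-alone quantity and the partial union quantity
condition holds for bundles not containing b_r, then the minimal optimal menu is
either a tree menu or a nested menu. -/
theorem stmt12 {n : ℕ} (hn : 1 ≤ n) (t0 t1 : ℝ) (ht : t0 < t1)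
    (φ : Bundle n → ℝ → ℝ)
    (hcont : ∀ b : Bundle n, ContinuousOn (φ b) (Set.Icc t0 t1))
    (hdist : Distinct φ t0 t1)
    (hmd : MD φ t0 t1)
    (hscd : SCDstar φ t0 t1)
    (hempty : ∀ t ∈ Set.Icc t0 t1, φ (∅ : Bundle n) t = 0)
    (hneg : ∀ b : Bundle n, b ≠ ∅ → φ b t0 < 0)
    (hpos : ∀ b : Bundle n, b ≠ ∅ → 0 < φ b t1)
    (tz : Bundle n → ℝ)
    (htz_mem : ∀ b : Bundle n, b ≠ ∅ → tz b ∈ Set.Ioo t0 t1)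
    (htz_zero : ∀ b : Bundle n, b ≠ ∅ → φ b (tz b) = 0)
    (htz_uniq : ∀ b : Bundle n, b ≠ ∅ → ∀ s ∈ Set.Icc t0 t1, φ b s = 0 → s = tz b)
    (hmono : ∀ b b' : Bundle n, b ⊂ b' → φ b t1 < φ b' t1)
    (br : Bundle n) (hbr : br ≠ ∅)
    (hroot1 : ∀ b : Bundle n, b ≠ ∅ → b ≠ br → tz br < tz b)
    (hroot2 : ∀ b : Bundle n, b ≠ ∅ → ¬ br ⊆ b →
      tz (b ∪ br) ≤ max (tz b) (tz br)) :
    ∀ S : Finset (Bundle n), MinimalOptimalMenu φ t0 t1 S →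
      IsTreeMenu S ∨ IsNestedMenu S := by
  intro S hS
  by_cases hNest : IsNestedMenu S
  · right; exact hNest
  left
  -- sign lemmas via IVT and uniqueness of zeros
  have sign_pos : ∀ x : Bundle n, x ≠ ∅ → ∀ s, t0 ≤ s → s ≤ t1 → tz x < s → 0 < φ x s := by
    intro x hx s hs0 hs1 hlt
    by_contra h
    push_neg at h
    have hsub : Set.Icc s t1 ⊆ Set.Icc t0 t1 := Set.Icc_subset_Icc hs0 le_rfl
    have hivt := intermediate_value_Icc hs1 ((hcont x).mono hsub)
    have h0 : (0:ℝ) ∈ Set.Icc (φ x s) (φ x t1) := ⟨h, le_of_lt (hpos x hx)⟩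
    obtain ⟨z, hz, hz0⟩ := hivt h0
    have := htz_uniq x hx z ⟨le_trans hs0 hz.1, hz.2⟩ hz0
    have : tz x < z := lt_of_lt_of_le hlt hz.1
    linarith [htz_uniq x hx z ⟨le_trans hs0 hz.1, hz.2⟩ hz0]
  have sign_neg : ∀ x : Bundle n, x ≠ ∅ → ∀ s, t0 ≤ s → s ≤ t1 → s < tz x → φ x s < 0 := by
    intro x hx s hs0 hs1 hlt
    by_contra h
    push_neg at h
    have hsub : Set.Icc t0 s ⊆ Set.Icc t0 t1 := Set.Icc_subset_Icc le_rfl hs1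
    have hivt := intermediate_value_Icc hs0 ((hcont x).mono hsub)
    have h0 : (0:ℝ) ∈ Set.Icc (φ x t0) (φ x s) := ⟨le_of_lt (hneg x hx), h⟩
    obtain ⟨z, hz, hz0⟩ := hivt h0
    have hzz := htz_uniq x hx z ⟨hz.1, le_trans hz.2 hs1⟩ hz0
    have : z < tz x := lt_of_le_of_lt hz.2 hlt
    linarith
  -- the empty bundle is in every optimal menu
  have hemptyS : (∅ : Bundle n) ∈ S := by
    obtain ⟨b0, hb0, hmax⟩ := hS.1 t0 ⟨le_rfl, le_of_lt ht⟩
    have h0 : (0:ℝ) ≤ φ b0 t0 := by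
      have := hmax (∅ : Bundle n)
      rwa [hempty t0 ⟨le_rfl, le_of_lt ht⟩] at this
    by_cases hb0e : b0 = (∅ : Bundle n)
    · exact hb0e ▸ hb0
    · exact absurd h0 (not_le.mpr (hneg b0 hb0e))
  -- incomparable pair
  rw [IsNestedMenu] at hNest
  push_neg at hNest
  obtain ⟨b1, hb1, b2, hb2, h12, h21⟩ := hNest
  have hb1ne : b1 ≠ (∅ : Bundle n) := by rintro rfl; exact h12 (Finset.empty_subset _)
  have hb2ne : b2 ≠ (∅ : Bundle n) := by rintro rfl; exact h21 (Finset.empty_subset _)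
  -- there is a nonempty bundle other than br
  have hx0 : ∃ x : Bundle n, x ≠ ∅ ∧ x ≠ br := by
    by_cases h : b1 = br
    · refine ⟨b2, hb2ne, ?_⟩
      intro h2
      exact h12 (le_of_eq (h.trans h2.symm))
    · exact ⟨b1, hb1ne, h⟩
  obtain ⟨x0, hx0ne, hx0br⟩ := hx0
  -- br is in every optimal menu
  have hTne : ((Finset.univ.filter (fun x : Bundle n => x ≠ ∅ ∧ x ≠ br)).image tz).Nonempty :=
    ⟨tz x0, Finset.mem_image_of_mem _ (Finset.mem_filter.mpr ⟨Finset.mem_univ _, hx0ne, hx0br⟩)⟩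
  set m := ((Finset.univ.filter (fun x : Bundle n => x ≠ ∅ ∧ x ≠ br)).image tz).min' hTne with hmdef
  have hm_le : ∀ x : Bundle n, x ≠ ∅ → x ≠ br → m ≤ tz x := by
    intro x h1 h2
    exact Finset.min'_le _ _ (Finset.mem_image_of_mem _ (Finset.mem_filter.mpr ⟨Finset.mem_univ _, h1, h2⟩))
  have hm_mem : ∃ x : Bundle n, x ≠ ∅ ∧ x ≠ br ∧ tz x = m := by
    have hmm := Finset.min'_mem _ hTne
    rw [Finset.mem_image] at hmm
    obtain ⟨x, hx, hxm⟩ := hmm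
    rw [Finset.mem_filter] at hx
    exact ⟨x, hx.2.1, hx.2.2, hxm⟩
  obtain ⟨xm, hxm1, hxm2, hxm3⟩ := hm_mem
  have hbrm : tz br < m := hxm3 ▸ hroot1 xm hxm1 hxm2
  have hmt1 : m < t1 := hxm3 ▸ (htz_mem xm hxm1).2
  have hbr01 := htz_mem br hbr
  set tq := (tz br + m)/2 with htqdef
  have hq1 : tz br < tq := by rw [htqdef]; linarith
  have hq2 : tq < m := by rw [htqdef]; linarith
  have hqI : tq ∈ Set.Icc t0 t1 := ⟨by linarith [hbr01.1], by linarith⟩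
  obtain ⟨b0, hb0S, hmax0⟩ := hS.1 tq hqI
  have hbrq : 0 < φ br tq := sign_pos br hbr tq hqI.1 hqI.2 hq1
  have hb0pos : 0 < φ b0 tq := lt_of_lt_of_le hbrq (hmax0 br)
  have hb0ne : b0 ≠ (∅ : Bundle n) := by
    rintro rfl
    rw [hempty tq hqI] at hb0pos
    exact lt_irrefl _ hb0pos
  have hb0br : b0 = br := by
    by_contra h
    have := sign_neg b0 hb0ne tq hqI.1 hqI.2 (lt_of_lt_of_le hq2 (hm_le b0 hb0ne h))
    linarith
  have hbrS : br ∈ S := hb0br ▸ hb0S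
  -- key step: every nonempty element of S contains br
  have hkey : ∀ b ∈ S, b ≠ (∅ : Bundle n) → br ⊆ b := by
    intro b hbS hbne
    by_contra hnsub
    have hbne_br : b ≠ br := by rintro rfl; exact hnsub subset_rfl
    have hcne : b ∪ br ≠ (∅ : Bundle n) := by
      intro h
      exact hbr (Finset.union_eq_empty.mp h).2
    have hbc : b ⊂ b ∪ br := by
      refine Finset.ssubset_iff_of_subset Finset.subset_union_left |>.mpr ?_
      obtain ⟨i, hi1, hi2⟩ := Finset.not_subset.mp hnsub
      exact ⟨i, Finset.mem_union_right _ hi1, hi2⟩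
    have hd1 : φ b t1 < φ (b ∪ br) t1 := hmono b (b ∪ br) hbc
    have htzbrb : tz br < tz b := hroot1 b hbne hbne_br
    have htzc : tz (b ∪ br) ≤ tz b := by
      have h := hroot2 b hbne hnsub
      rwa [max_eq_left (le_of_lt htzbrb)] at h
    have htzbI : tz b ∈ Set.Icc t0 t1 :=
      ⟨le_of_lt (htz_mem b hbne).1, le_of_lt (htz_mem b hbne).2⟩
    have ht1I : t1 ∈ Set.Icc t0 t1 := ⟨le_of_lt ht, le_rfl⟩
    -- witness for b
    have hnotopt := hS.2 (S.erase b) (Finset.erase_ssubset hbS)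
    rw [OptimalMenu] at hnotopt
    push_neg at hnotopt
    obtain ⟨tw, htwI, hwit⟩ := hnotopt
    obtain ⟨bb, hbbS, hmax⟩ := hS.1 tw htwI
    have hbb : bb = b := by
      by_contra h
      obtain ⟨b', hb'⟩ := hwit bb (Finset.mem_erase.mpr ⟨h, hbbS⟩)
      exact absurd (hmax b') (not_le.mpr hb')
    rw [hbb] at hmax
    have hlt : ∀ x ∈ S, x ≠ b → φ x tw < φ b tw := by
      intro x hx hxe
      obtain ⟨b', hb'⟩ := hwit x (Finset.mem_erase.mpr ⟨hxe, hx⟩)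
      exact lt_of_lt_of_le hb' (hmax b')
    have hM0 : 0 < φ b tw := by
      have h0 := hlt (∅ : Bundle n) hemptyS (Ne.symm hbne)
      rwa [hempty tw htwI] at h0
    have htzb_lt : tz b < tw := by
      by_contra h
      push_neg at h
      rcases eq_or_lt_of_le h with heq | hlt2
      · rw [heq, htz_zero b hbne] at hM0; exact lt_irrefl _ hM0
      · have := sign_neg b hbne tw htwI.1 htwI.2 hlt2
        linarith
    have hφc_tzb : 0 ≤ φ (b ∪ br) (tz b) := by
      rcases lt_or_eq_of_le htzc with h | h
      · exact le_of_lt (sign_pos (b ∪ br) hcne (tz b) htzbI.1 htzbI.2 h)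
      · rw [← h, htz_zero (b ∪ br) hcne]
    have hd_mono : MonotoneOn (fun t => φ (b ∪ br) t - φ b t) (Set.Icc t0 t1) := by
      rcases hmd (b ∪ br) b with h | h
      · exact h
      · exfalso
        have h1 : φ (b ∪ br) tw - φ b tw ≤ 0 := sub_nonpos.mpr (hmax (b ∪ br))
        have h2 := h htwI ht1I htwI.2
        simp only at h2
        linarith
    have hmono_app := hd_mono htzbI htwI (le_of_lt htzb_lt)
    simp only at hmono_app
    have hzb : φ b (tz b) = 0 := htz_zero b hbne
    have hdtwle : φ (b ∪ br) tw - φ b tw ≤ 0 := sub_nonpos.mpr (hmax (b ∪ br))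
    have hdc_tw : φ (b ∪ br) tw = φ b tw := by linarith
    have hc_tzb : φ (b ∪ br) (tz b) = 0 := by linarith
    have hcS : (b ∪ br) ∉ S := by
      intro h
      have := hlt (b ∪ br) h (Ne.symm hbc.ne)
      linarith
    have hbrc : br ≠ b ∪ br := by
      intro h
      exact hcS (h ▸ hbrS)
    -- SCD* violation
    set D := φ (b ∪ br) t1 - φ b t1 with hDdef
    have hD : 0 < D := by rw [hDdef]; linarith
    set κ := max 1 ((φ b t1 - φ br t1) / D + 1) with hκdef
    have hκ1 : (1:ℝ) ≤ κ := le_max_left _ _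
    have hκpos : (0:ℝ) < κ := lt_of_lt_of_le one_pos hκ1
    have hκD : φ b t1 - φ br t1 < κ * D := by
      have h1 : (φ b t1 - φ br t1) / D < κ :=
        lt_of_lt_of_le (lt_add_one _) (le_max_right _ _)
      exact (div_lt_iff₀ hD).mp h1
    set K := 1 + κ with hKdef
    have hKpos : (0:ℝ) < K := by rw [hKdef]; linarith
    have hKne : (K:ℝ) ≠ 0 := ne_of_gt hKpos
    set a : Bundle n → ℝ := fun x => (if x = br then 1/K else 0) + (if x = b ∪ br then κ/K else 0) with hadef
    have haS : IsStoch a := by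
      constructor
      · intro x
        rw [hadef]
        have h1 : (0:ℝ) ≤ 1/K := le_of_lt (div_pos one_pos hKpos)
        have h2 : (0:ℝ) ≤ κ/K := le_of_lt (div_pos hκpos hKpos)
        dsimp only
        split_ifs <;> linarith
      · rw [hadef]
        rw [Finset.sum_add_distrib]
        rw [Finset.sum_ite_eq' Finset.univ br (fun _ => 1/K)]
        rw [Finset.sum_ite_eq' Finset.univ (b ∪ br) (fun _ => κ/K)]
        simp only [Finset.mem_univ, if_true]
        field_simp
        exact hKdef.symm
    have hptS : IsStoch (pt b) := by
      constructor
      · intro x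
        simp only [pt]
        split <;> norm_num
      · simp only [pt]
        rw [Finset.sum_ite_eq' Finset.univ b (fun _ => (1:ℝ))]
        simp
    have hphiA : ∀ t, phiA φ a t = (1/K) * φ br t + (κ/K) * φ (b ∪ br) t := by
      intro t
      rw [phiA, hadef]
      simp only [add_mul, ite_mul, zero_mul, Finset.sum_add_distrib]
      rw [Finset.sum_ite_eq' Finset.univ br (fun x => 1/K * φ x t)]
      rw [Finset.sum_ite_eq' Finset.univ (b ∪ br) (fun x => κ/K * φ x t)]
      simp only [Finset.mem_univ, if_true]
    have hpt : ∀ t, phiA φ (pt b) t = φ b t := by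
      intro t
      rw [phiA]
      simp only [pt, ite_mul, one_mul, zero_mul]
      rw [Finset.sum_ite_eq' Finset.univ b (fun x => φ x t)]
      simp
    have hscd2 := hscd a (pt b) haS hptS
    have hbrtzb : 0 < φ br (tz b) := sign_pos br hbr (tz b) htzbI.1 htzbI.2 htzbrb
    have hFtzb : 0 < phiA φ a (tz b) - phiA φ (pt b) (tz b) := by
      rw [hphiA, hpt, hc_tzb, hzb]
      have h1 : (0:ℝ) < 1/K := div_pos one_pos hKpos
      nlinarith
    have hbrtw : φ br tw < φ b tw := hlt br hbrS (Ne.symm hbne_br)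
    have hFtw : phiA φ a tw - phiA φ (pt b) tw < 0 := by
      rw [hphiA, hpt, hdc_tw]
      have heq : (1/K) * φ br tw + (κ/K) * φ b tw - φ b tw = (φ br tw - φ b tw)/K := by
        field_simp
        ring
      rw [heq]
      exact div_neg_of_neg_of_pos (by linarith) hKpos
    have hFt1 : 0 < phiA φ a t1 - phiA φ (pt b) t1 := by
      rw [hphiA, hpt]
      have heq : (1/K) * φ br t1 + (κ/K) * φ (b ∪ br) t1 - φ b t1
          = ((φ br t1 - φ b t1) + κ * D)/K := by
        rw [hDdef, hKdef]
        field_simp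
        ring
      rw [heq]
      exact div_pos (by linarith) hKpos
    rcases hscd2 with hm | ha
    · have hsgn := hm htzbI htwI (le_of_lt htzb_lt)
      simp only at hsgn
      rw [Real.sign_of_pos hFtzb, Real.sign_of_neg hFtw] at hsgn
      linarith
    · have hsgn := ha htwI ht1I htwI.2
      simp only at hsgn
      rw [Real.sign_of_pos hFt1, Real.sign_of_neg hFtw] at hsgn
      linarith
  exact ⟨⟨br, hbrS, hbr, hkey⟩, b1, hb1, b2, hb2, h12, h21⟩

end Paper
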